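/- Let S be a determinantal point process on a finite set X = {1,...,N} whose kernel matrix K is a Hermitian projection of rank m (so that |S| = m almost surely), and let f: X → ℝ be a bounded function. Then for all a ≥ 0, P( Λ_S(f) − E[Λ_S(f)] ≥ a ) ≤ exp( − a² / (8 m ‖f‖_∞²) ), where Λ_S(f) = Σ_{x∈S} f(x) and ‖f‖_∞ = max_{x∈X} |f(x)|. -/

import Mathlib

open scoped Classical

/-- `μ` is the law of a determinantal point process on `Fin N` with kernel `K`:
it is a probability distribution on subsets with `P(A ⊆ S) = det K_A` for all `A`. -/
def IsDPPLaw {N : ℕ} (μ : Finset (Fin N) → ℝ) (K : Matrix (Fin N) (Fin N) ℂ) : Prop :=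
  (∀ A, 0 ≤ μ A) ∧ (∑ A : Finset (Fin N), μ A) = 1 ∧
    ∀ A : Finset (Fin N),
      ((∑ S ∈ Finset.univ.filter (fun S => A ⊆ S), μ S : ℝ) : ℂ)
        = (K.submatrix (fun i : A => (i : Fin N)) (fun j : A => (j : Fin N))).det

namespace DPPAux

open scoped ComplexOrder
open Matrix Finset

lemma det_piecewise_one {N : ℕ} {R : Type*} [CommRing R] (M : Matrix (Fin N) (Fin N) R)
    (s : Finset (Fin N)) :
    Matrix.det (Matrix.of (s.piecewise M (1 : Matrix (Fin N) (Fin N) R)))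
      = (M.submatrix (fun i : s => (i : Fin N)) (fun j : s => (j : Fin N))).det := by
  let e : {x : Fin N // x ∈ s} ⊕ {x : Fin N // ¬ x ∈ s} ≃ Fin N := Equiv.sumCompl (· ∈ s)
  have hblock : (Matrix.of (s.piecewise M (1 : Matrix (Fin N) (Fin N) R))).submatrix e e =
      Matrix.fromBlocks (M.submatrix (fun i : s => (i : Fin N)) (fun j : s => (j : Fin N)))
        (M.submatrix (fun i : s => (i : Fin N)) (fun j : {x : Fin N // ¬ x ∈ s} => (j : Fin N)))
        0 (1 : Matrix {x : Fin N // ¬ x ∈ s} {x : Fin N // ¬ x ∈ s} R) := by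
    ext i j
    rcases i with i | i <;> rcases j with j | j
    · simp [e, Finset.piecewise, i.2]
    · simp [e, Finset.piecewise, i.2]
    · have hne : (i : Fin N) ≠ (j : Fin N) := fun h => i.2 (h ▸ j.2)
      simp [e, Finset.piecewise, i.2, Matrix.one_apply, hne]
    · simp [e, Finset.piecewise, i.2, Matrix.one_apply, Subtype.ext_iff]
  calc (Matrix.of (s.piecewise M (1 : Matrix (Fin N) (Fin N) R))).det
      = ((Matrix.of (s.piecewise M (1 : Matrix (Fin N) (Fin N) R))).submatrix e e).det :=
        (Matrix.det_submatrix_equiv_self e _).symm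
    _ = _ := by rw [hblock, Matrix.det_fromBlocks_zero₂₁, Matrix.det_one, mul_one]

lemma det_one_add_sum {N : ℕ} {R : Type*} [CommRing R] (M : Matrix (Fin N) (Fin N) R) :
    (1 + M).det = ∑ s : Finset (Fin N),
      (M.submatrix (fun i : s => (i : Fin N)) (fun j : s => (j : Fin N))).det := by
  rw [show (1 + M : Matrix (Fin N) (Fin N) R) = M + 1 from add_comm 1 M]
  have h0 : (M + 1 : Matrix (Fin N) (Fin N) R).det
      = (Matrix.detRowAlternating (R := R) (n := Fin N)).toMultilinearMap
          (Matrix.of.symm M + Matrix.of.symm (1 : Matrix (Fin N) (Fin N) R)) := rfl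
  rw [h0, MultilinearMap.map_add_univ]
  refine Finset.sum_congr rfl fun s _ => ?_
  have h1 : (Matrix.detRowAlternating (R := R) (n := Fin N)).toMultilinearMap
      (s.piecewise (Matrix.of.symm M) (Matrix.of.symm (1 : Matrix (Fin N) (Fin N) R)))
      = Matrix.det (Matrix.of (s.piecewise M (1 : Matrix (Fin N) (Fin N) R))) := rfl
  rw [h1, det_piecewise_one]

lemma trace_eq_sum_eigenvalues {N : ℕ} {A : Matrix (Fin N) (Fin N) ℂ} (hA : A.IsHermitian) :
    A.trace = ∑ i, (hA.eigenvalues i : ℂ) := by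
  conv_lhs => rw [hA.spectral_theorem]
  rw [Unitary.conjStarAlgAut_apply, Matrix.trace_mul_comm, ← Matrix.mul_assoc, Unitary.coe_star_mul_self, Matrix.one_mul,
    Matrix.trace_diagonal]
  simp [Function.comp]

lemma eig_zero_or_one {N : ℕ} {K : Matrix (Fin N) (Fin N) ℂ} (hK : K.IsHermitian)
    (hproj : K * K = K) (i : Fin N) : hK.eigenvalues i = 0 ∨ hK.eigenvalues i = 1 := by
  have hD : star (hK.eigenvectorUnitary : Matrix (Fin N) (Fin N) ℂ) * K
      * (hK.eigenvectorUnitary : Matrix (Fin N) (Fin N) ℂ)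
      = Matrix.diagonal (RCLike.ofReal ∘ hK.eigenvalues) := by
    have := hK.conjStarAlgAut_star_eigenvectorUnitary
    simpa using this
  set U : Matrix (Fin N) (Fin N) ℂ := (hK.eigenvectorUnitary : Matrix (Fin N) (Fin N) ℂ) with hU
  have hUU : U * star U = 1 := Matrix.mem_unitaryGroup_iff.mp hK.eigenvectorUnitary.2
  have hDD : (Matrix.diagonal (RCLike.ofReal ∘ hK.eigenvalues) : Matrix (Fin N) (Fin N) ℂ)
      * Matrix.diagonal (RCLike.ofReal ∘ hK.eigenvalues)
      = Matrix.diagonal (RCLike.ofReal ∘ hK.eigenvalues) := by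
    rw [← hD]
    calc (star U * K * U) * (star U * K * U) = star U * K * (U * star U) * K * U := by
          simp only [Matrix.mul_assoc]
      _ = star U * (K * K) * U := by rw [hUU]; simp only [Matrix.mul_assoc, Matrix.one_mul]
      _ = star U * K * U := by rw [hproj, Matrix.mul_assoc]
  rw [Matrix.diagonal_mul_diagonal] at hDD
  have h2 := congrFun (Matrix.diagonal_injective hDD) i
  simp only [Pi.mul_apply, Function.comp_apply] at h2
  have h3 : hK.eigenvalues i * hK.eigenvalues i = hK.eigenvalues i := by
    exact_mod_cast h2
  rcases mul_eq_zero.mp (show hK.eigenvalues i * (hK.eigenvalues i - 1) = 0 by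
      ring_nf; linarith [h3]) with h | h
  · exact Or.inl h
  · exact Or.inr (by linarith)

lemma trace_proj {N m : ℕ} {K : Matrix (Fin N) (Fin N) ℂ} (hK : K.IsHermitian)
    (hproj : K * K = K) (hrank : K.rank = m) : K.trace = (m : ℂ) := by
  rw [trace_eq_sum_eigenvalues hK]
  have hm : (m : ℕ) = Fintype.card {i // hK.eigenvalues i ≠ 0} :=
    hrank ▸ hK.rank_eq_card_non_zero_eigs
  have h : ∑ i, (hK.eigenvalues i : ℂ)
      = ∑ i ∈ Finset.univ.filter (fun i => hK.eigenvalues i ≠ 0), (1 : ℂ) := by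
    rw [Finset.sum_filter]
    refine Finset.sum_congr rfl fun i _ => ?_
    rcases eig_zero_or_one hK hproj i with h | h <;> simp [h]
  rw [h, Finset.sum_const, nsmul_eq_mul, mul_one, hm, Fintype.card_subtype]

lemma det_le_exp_trace {N : ℕ} {M : Matrix (Fin N) (Fin N) ℂ}
    (h : (1 + M : Matrix (Fin N) (Fin N) ℂ).PosSemidef) {t : ℝ} (ht : M.trace = (t : ℂ)) :
    ∃ r : ℝ, (1 + M : Matrix (Fin N) (Fin N) ℂ).det = (r : ℂ) ∧ r ≤ Real.exp t := by
  have hH := h.1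
  refine ⟨∏ i, hH.eigenvalues i, ?_, ?_⟩
  · rw [hH.det_eq_prod_eigenvalues]; push_cast; rfl
  · have hsum : ∑ i, hH.eigenvalues i = N + t := by
      have h1 : ((∑ i, hH.eigenvalues i : ℝ) : ℂ) = ((N + t : ℝ) : ℂ) := by
        push_cast
        rw [← trace_eq_sum_eigenvalues hH, Matrix.trace_add, ht, Matrix.trace_one]
        simp
      exact_mod_cast h1
    calc ∏ i, hH.eigenvalues i ≤ ∏ i, Real.exp (hH.eigenvalues i - 1) :=
          Finset.prod_le_prod (fun i _ => h.eigenvalues_nonneg i)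
            (fun i _ => by have := Real.add_one_le_exp (hH.eigenvalues i - 1); linarith)
      _ = Real.exp (∑ i, (hH.eigenvalues i - 1)) := by rw [Real.exp_sum]
      _ = Real.exp t := by
          congr 1
          rw [Finset.sum_sub_distrib, hsum]
          simp

lemma det_submatrix_eq_zero {N m : ℕ} {K : Matrix (Fin N) (Fin N) ℂ} (hrank : K.rank = m)
    (B : Finset (Fin N)) (hB : m < B.card) :
    (K.submatrix (fun i : B => (i : Fin N)) (fun j : B => (j : Fin N))).det = 0 := by
  by_contra hdet
  have hunit : IsUnit (K.submatrix (fun i : B => (i : Fin N)) (fun j : B => (j : Fin N))) :=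
    (Matrix.isUnit_iff_isUnit_det _).mpr (isUnit_iff_ne_zero.mpr hdet)
  have hr1 : (K.submatrix (fun i : B => (i : Fin N)) (fun j : B => (j : Fin N))).rank
      = Fintype.card B := Matrix.rank_of_isUnit _ hunit
  have hr2 : (K.submatrix (fun i : B => (i : Fin N)) (fun j : B => (j : Fin N))).rank
      ≤ K.rank := by
    have e1 : K.submatrix (fun i : B => (i : Fin N)) _root_.id
          * (1 : Matrix (Fin N) (Fin N) ℂ).submatrix (Equiv.refl (Fin N)) (fun j : B => (j : Fin N))
        = K.submatrix (fun i : B => (i : Fin N)) (fun j : B => (j : Fin N)) := by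
      rw [Matrix.mul_submatrix_one]
      simp [Matrix.submatrix_submatrix]
    have e2 : (1 : Matrix (Fin N) (Fin N) ℂ).submatrix (fun i : B => (i : Fin N)) (Equiv.refl (Fin N)) * K
        = K.submatrix (fun i : B => (i : Fin N)) _root_.id := by
      rw [Matrix.one_submatrix_mul]
      simp
    calc (K.submatrix (fun i : B => (i : Fin N)) (fun j : B => (j : Fin N))).rank
        = (K.submatrix (fun i : B => (i : Fin N)) _root_.id
            * (1 : Matrix (Fin N) (Fin N) ℂ).submatrix (Equiv.refl (Fin N))
              (fun j : B => (j : Fin N))).rank := by rw [e1]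
      _ ≤ (K.submatrix (fun i : B => (i : Fin N)) _root_.id).rank := Matrix.rank_mul_le_left _ _
      _ = ((1 : Matrix (Fin N) (Fin N) ℂ).submatrix (fun i : B => (i : Fin N))
            (Equiv.refl (Fin N)) * K).rank := by rw [e2]
      _ ≤ K.rank := Matrix.rank_mul_le_right _ _
  rw [hr1, hrank] at hr2
  have : Fintype.card B = B.card := Fintype.card_coe B
  omega

lemma mgf_eq {N : ℕ} {K : Matrix (Fin N) (Fin N) ℂ} {μ : Finset (Fin N) → ℝ}
    (hμ : IsDPPLaw μ K) (w : Fin N → ℂ) :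
    (∑ A : Finset (Fin N), (μ A : ℂ) * ∏ x ∈ A, w x)
      = (1 + K * Matrix.diagonal (fun x => w x - 1)).det := by
  have hexp : ∀ A : Finset (Fin N), (∏ x ∈ A, w x)
      = ∑ B ∈ A.powerset, ∏ x ∈ B, (w x - 1) := by
    intro A
    have := Finset.prod_add (fun x => w x - 1) (fun _ => (1 : ℂ)) A
    simp only [sub_add_cancel, Finset.prod_const_one, mul_one] at this
    exact this
  calc (∑ A : Finset (Fin N), (μ A : ℂ) * ∏ x ∈ A, w x)
      = ∑ A : Finset (Fin N), ∑ B ∈ A.powerset, (μ A : ℂ) * ∏ x ∈ B, (w x - 1) := by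
        refine Finset.sum_congr rfl fun A _ => ?_
        rw [hexp, Finset.mul_sum]
    _ = ∑ B : Finset (Fin N), ∑ A ∈ Finset.univ.filter (fun A => B ⊆ A),
          (μ A : ℂ) * ∏ x ∈ B, (w x - 1) := by
        refine Finset.sum_comm' ?_
        intro A B
        simp [Finset.mem_powerset]
    _ = ∑ B : Finset (Fin N),
          (K.submatrix (fun i : B => (i : Fin N)) (fun j : B => (j : Fin N))).det
            * ∏ x ∈ B, (w x - 1) := by
        refine Finset.sum_congr rfl fun B _ => ?_
        rw [← Finset.sum_mul, ← hμ.2.2 B]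
        push_cast
        rfl
    _ = ∑ B : Finset (Fin N),
          ((K * Matrix.diagonal (fun x => w x - 1)).submatrix
            (fun i : B => (i : Fin N)) (fun j : B => (j : Fin N))).det := by
        refine Finset.sum_congr rfl fun B _ => ?_
        have hsub : (K * Matrix.diagonal (fun x => w x - 1)).submatrix
            (fun i : B => (i : Fin N)) (fun j : B => (j : Fin N))
            = (K.submatrix (fun i : B => (i : Fin N)) (fun j : B => (j : Fin N)))
              * Matrix.diagonal (fun j : B => w (j : Fin N) - 1) := by
          ext i j
          rw [Matrix.submatrix_apply, Matrix.mul_diagonal, Matrix.mul_diagonal,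
            Matrix.submatrix_apply]
        rw [hsub, Matrix.det_mul, Matrix.det_diagonal]
        congr 1
        rw [← Finset.prod_coe_sort B (fun x => w x - 1)]
    _ = (1 + K * Matrix.diagonal (fun x => w x - 1)).det := (det_one_add_sum _).symm

lemma one_sub_psd {N : ℕ} {K : Matrix (Fin N) (Fin N) ℂ} (hK : K.IsHermitian)
    (hproj : K * K = K) : (1 - K : Matrix (Fin N) (Fin N) ℂ).PosSemidef := by
  have h1 : ((1 - K : Matrix (Fin N) (Fin N) ℂ))ᴴ * (1 - K) = 1 - K := by
    rw [Matrix.conjTranspose_sub, Matrix.conjTranspose_one, hK.eq, Matrix.sub_mul,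
      Matrix.mul_sub, Matrix.mul_sub, hproj]
    simp only [Matrix.one_mul, Matrix.mul_one]
    abel
  rw [← h1]
  exact Matrix.posSemidef_conjTranspose_mul_self _

lemma kwk_psd {N : ℕ} {K : Matrix (Fin N) (Fin N) ℂ} (hK : K.IsHermitian) (w : Fin N → ℝ)
    (hw : ∀ x, 0 ≤ w x) :
    (K * Matrix.diagonal (fun x => (w x : ℂ)) * K).PosSemidef := by
  set S : Matrix (Fin N) (Fin N) ℂ :=
    Matrix.diagonal (fun x => (Real.sqrt (w x) : ℂ)) * K with hS
  have h1 : Sᴴ * S = K * Matrix.diagonal (fun x => (w x : ℂ)) * K := by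
    rw [hS, Matrix.conjTranspose_mul, Matrix.diagonal_conjTranspose, hK.eq]
    have h2 : star (fun x => (Real.sqrt (w x) : ℂ)) = fun x => (Real.sqrt (w x) : ℂ) := by
      funext x
      simp [Complex.conj_ofReal]
    rw [h2, Matrix.mul_assoc, ← Matrix.mul_assoc (Matrix.diagonal _),
      Matrix.diagonal_mul_diagonal, ← Matrix.mul_assoc]
    have h3 : (fun i => (Real.sqrt (w i) : ℂ) * (Real.sqrt (w i) : ℂ))
        = fun x => ((w x : ℂ)) := by
      funext x
      rw [← Complex.ofReal_mul, Real.mul_self_sqrt (hw x)]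
    rw [h3]
  rw [← h1]
  exact Matrix.posSemidef_conjTranspose_mul_self _

lemma one_add_kzk_psd {N : ℕ} {K : Matrix (Fin N) (Fin N) ℂ} (hK : K.IsHermitian)
    (hproj : K * K = K) (w : Fin N → ℝ) (hw : ∀ x, 0 ≤ w x) :
    (1 + K * Matrix.diagonal (fun x => ((w x : ℂ) - 1)) * K).PosSemidef := by
  have hd : (Matrix.diagonal (fun x => ((w x : ℂ) - 1)) : Matrix (Fin N) (Fin N) ℂ)
      = Matrix.diagonal (fun x => (w x : ℂ)) - 1 := by
    rw [← Matrix.diagonal_one, Matrix.diagonal_sub]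
  have h2 : (1 + K * Matrix.diagonal (fun x => ((w x : ℂ) - 1)) * K : Matrix (Fin N) (Fin N) ℂ)
      = (1 - K) + K * Matrix.diagonal (fun x => (w x : ℂ)) * K := by
    rw [hd, Matrix.mul_sub, Matrix.mul_one, Matrix.sub_mul, hproj]
    abel
  rw [h2]
  exact (one_sub_psd hK hproj).add (kwk_psd hK w hw)

lemma trace_kzk {N : ℕ} {K : Matrix (Fin N) (Fin N) ℂ} (hproj : K * K = K) (z : Fin N → ℂ) :
    (K * Matrix.diagonal z * K).trace = ∑ x, K x x * z x := by
  rw [Matrix.trace_mul_comm, ← Matrix.mul_assoc, hproj]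
  rw [Matrix.trace]
  refine Finset.sum_congr rfl fun x _ => ?_
  simp [Matrix.diag, Matrix.mul_diagonal]

lemma exp_le_one_add_add_sq {u : ℝ} (h : |u| ≤ 1) : Real.exp u ≤ 1 + u + u ^ 2 := by
  have h2 := Real.exp_bound h (by norm_num : 0 < 2)
  have hsum : ∑ m ∈ Finset.range 2, u ^ m / m.factorial = 1 + u := by
    simp [Finset.sum_range_succ]
  rw [hsum] at h2
  have h3 : Real.exp u - (1 + u) ≤ |u| ^ 2 * ((2 + 1 : ℕ) / ((2 : ℕ).factorial * 2)) :=
    (abs_sub_le_iff.mp h2).1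
  have h4 : (|u| : ℝ) ^ 2 = u ^ 2 := sq_abs u
  have h5 : ((2 + 1 : ℕ) : ℝ) / ((2 : ℕ).factorial * 2) = 3 / 4 := by norm_num [Nat.factorial]
  nlinarith [sq_nonneg u]

lemma det_singleton {N : ℕ} (K : Matrix (Fin N) (Fin N) ℂ) (x : Fin N) :
    (K.submatrix (fun i : ({x} : Finset (Fin N)) => (i : Fin N))
      (fun j : ({x} : Finset (Fin N)) => (j : Fin N))).det = K x x := by
  haveI : Unique (({x} : Finset (Fin N)) : Type) :=
    ⟨⟨⟨x, Finset.mem_singleton_self x⟩⟩, fun i => Subtype.ext (Finset.mem_singleton.mp i.2)⟩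
  rw [Matrix.det_unique, Matrix.submatrix_apply]
  congr 1 <;> exact Finset.mem_singleton.mp (Subtype.prop _)

end DPPAux

open DPPAux Matrix Finset in
/-- **Pemantle–Peres concentration for projection DPPs.** If `S` is a DPP on `{1,…,N}`
whose kernel `K` is a Hermitian projection of rank `m`, and `f : {1,…,N} → ℝ` is bounded,
then for all `a ≥ 0`,
`P(Λ_S(f) − E[Λ_S(f)] ≥ a) ≤ exp(−a²/(8 m ‖f‖_∞²))`, where `Λ_S(f) = ∑_{x∈S} f(x)`. -/
theorem projection_dpp_lipschitz_concentration
    {N m : ℕ} (K : Matrix (Fin N) (Fin N) ℂ)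
    (hK : K.IsHermitian) (hproj : K * K = K) (hrank : K.rank = m)
    (μ : Finset (Fin N) → ℝ) (hμ : IsDPPLaw μ K)
    (f : Fin N → ℝ) (a : ℝ) (ha : 0 ≤ a) :
    (∑ A ∈ Finset.univ.filter (fun A : Finset (Fin N) =>
        (∑ B : Finset (Fin N), μ B * ∑ x ∈ B, f x) + a ≤ ∑ x ∈ A, f x),
      μ A)
    ≤ Real.exp (-(a ^ 2) / (8 * (m : ℝ) * (⨆ x : Fin N, |f x|) ^ 2)) := by
  obtain ⟨hμ0, hμ1, hμdet⟩ := hμ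
  set c : ℝ := ⨆ x : Fin N, |f x| with hc
  set E : ℝ := ∑ B : Finset (Fin N), μ B * ∑ x ∈ B, f x with hE
  set p : Fin N → ℝ := fun x => ∑ B ∈ Finset.univ.filter (fun B => x ∈ B), μ B with hp
  have hp0 : ∀ x, 0 ≤ p x := fun x => Finset.sum_nonneg fun B _ => hμ0 B
  have hpK : ∀ x, (p x : ℂ) = K x x := by
    intro x
    have h := hμdet {x}
    rw [det_singleton] at h
    rw [← h, hp]
    dsimp only
    congr 2
    apply Finset.filter_congr
    intro S _
    simp [Finset.singleton_subset_iff]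
  have hpsum : ∑ x, p x = (m : ℝ) := by
    have h1 : ((∑ x, p x : ℝ) : ℂ) = ((m : ℝ) : ℂ) := by
      push_cast
      rw [Finset.sum_congr rfl (fun x _ => hpK x)]
      exact trace_proj hK hproj hrank
    exact_mod_cast h1
  have hEp : E = ∑ x, p x * f x := by
    rw [hE]
    calc ∑ B : Finset (Fin N), μ B * ∑ x ∈ B, f x
        = ∑ B : Finset (Fin N), ∑ x ∈ Finset.univ, (if x ∈ B then μ B * f x else 0) := by
          refine Finset.sum_congr rfl fun B _ => ?_
          rw [Finset.mul_sum, Finset.sum_ite_mem, Finset.univ_inter]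
      _ = ∑ x ∈ Finset.univ, ∑ B : Finset (Fin N), (if x ∈ B then μ B * f x else 0) :=
          Finset.sum_comm
      _ = ∑ x, p x * f x := by
          refine Finset.sum_congr rfl fun x _ => ?_
          rw [hp, ← Finset.sum_filter, ← Finset.sum_mul]
  have habs : ∀ x, |f x| ≤ c := fun x =>
    le_ciSup (f := fun x : Fin N => |f x|) (Set.Finite.bddAbove (Set.finite_range _)) x
  have hc0 : 0 ≤ c := Real.iSup_nonneg fun x => abs_nonneg _
  by_cases hd : 8 * (m : ℝ) * c ^ 2 = 0
  · rw [hd, div_zero, Real.exp_zero]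
    calc (∑ A ∈ Finset.univ.filter (fun A : Finset (Fin N) => E + a ≤ ∑ x ∈ A, f x), μ A)
        ≤ ∑ A : Finset (Fin N), μ A :=
          Finset.sum_le_sum_of_subset_of_nonneg (Finset.filter_subset _ _)
            (fun B _ _ => hμ0 B)
      _ = 1 := hμ1
  · have hm0 : 0 < (m : ℝ) := by
      rcases mul_ne_zero_iff.mp hd with ⟨h8m, hc2⟩
      rcases mul_ne_zero_iff.mp h8m with ⟨-, hmne⟩
      have : (m : ℝ) ≠ 0 := hmne
      positivity
    have hcpos : 0 < c := by
      rcases mul_ne_zero_iff.mp hd with ⟨-, hc2⟩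
      have : c ≠ 0 := fun h => hc2 (by rw [h]; ring)
      exact lt_of_le_of_ne hc0 (Ne.symm this)
    have hmc : 0 < (m : ℝ) * c ^ 2 := by positivity
    have hcard : ∀ A : Finset (Fin N), μ A ≠ 0 → (A.card : ℝ) ≤ (m : ℝ) := by
      intro A hA
      by_contra hlt
      push_neg at hlt
      have hlt' : m + 1 ≤ A.card := by exact_mod_cast Nat.succ_le_of_lt (by exact_mod_cast hlt)
      obtain ⟨B, hBA, hBcard⟩ := Finset.exists_subset_card_eq hlt'
      have h0 : ((∑ S ∈ Finset.univ.filter (fun S => B ⊆ S), μ S : ℝ) : ℂ) = 0 := by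
        rw [hμdet B, det_submatrix_eq_zero hrank B (by omega)]
      have h0' : ∑ S ∈ Finset.univ.filter (fun S => B ⊆ S), μ S = 0 := by exact_mod_cast h0
      have hz := (Finset.sum_eq_zero_iff_of_nonneg (fun S _ => hμ0 S)).mp h0' A
        (by simp [hBA])
      exact hA hz
    have hsum_le : ∀ A : Finset (Fin N), μ A ≠ 0 → ∑ x ∈ A, f x ≤ (m : ℝ) * c := by
      intro A hA
      calc ∑ x ∈ A, f x ≤ ∑ x ∈ A, c :=
            Finset.sum_le_sum fun x _ => (le_abs_self _).trans (habs x)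
        _ = (A.card : ℝ) * c := by rw [Finset.sum_const, nsmul_eq_mul]
        _ ≤ (m : ℝ) * c := mul_le_mul_of_nonneg_right (hcard A hA) hc0
    have hE_ge : -((m : ℝ) * c) ≤ E := by
      rw [hEp]
      have h1 : ∀ x, p x * (-c) ≤ p x * f x := fun x =>
        mul_le_mul_of_nonneg_left (by have h2 := habs x; have h3 := neg_abs_le (f x); linarith)
          (hp0 x)
      calc -((m : ℝ) * c) = ∑ x, p x * (-c) := by rw [← Finset.sum_mul, hpsum]; ring
        _ ≤ ∑ x, p x * f x := Finset.sum_le_sum fun x _ => h1 x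
    by_cases haa : 2 * (m : ℝ) * c < a
    · have hz : ∀ A ∈ Finset.univ.filter
          (fun A : Finset (Fin N) => E + a ≤ ∑ x ∈ A, f x), μ A = 0 := by
        intro A hAf
        rw [Finset.mem_filter] at hAf
        by_contra hA
        have h1 := hsum_le A hA
        linarith [hAf.2]
      rw [Finset.sum_eq_zero hz]
      positivity
    · push_neg at haa
      set θ : ℝ := a / (2 * ((m : ℝ) * c ^ 2)) with hθ
      have hθ0 : 0 ≤ θ := div_nonneg ha (by positivity)
      have hθc : ∀ x, |θ * f x| ≤ 1 := by
        intro x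
        rw [abs_mul, abs_of_nonneg hθ0]
        calc θ * |f x| ≤ θ * c := mul_le_mul_of_nonneg_left (habs x) hθ0
          _ ≤ 1 := by
            rw [hθ, div_mul_eq_mul_div, div_le_one (by positivity)]
            nlinarith
      set w : Fin N → ℝ := fun x => Real.exp (θ * f x) with hw
      have hw0 : ∀ x, 0 ≤ w x := fun x => (Real.exp_pos _).le
      have hMGF : ∑ A : Finset (Fin N), μ A * ∏ x ∈ A, w x
          ≤ Real.exp (∑ x, p x * (w x - 1)) := by
        have hid := mgf_eq ⟨hμ0, hμ1, hμdet⟩ (fun x => (w x : ℂ))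
        have hcomm : (1 + K * Matrix.diagonal (fun x => ((w x : ℂ)) - 1)).det
            = (1 + K * Matrix.diagonal (fun x => ((w x : ℂ)) - 1) * K).det := by
          conv_lhs => rw [← hproj]
          rw [Matrix.mul_assoc, Matrix.det_one_add_mul_comm]
        have hpsd := one_add_kzk_psd hK hproj w hw0
        have htr : (K * Matrix.diagonal (fun x => ((w x : ℂ) - 1)) * K).trace
            = ((∑ x, p x * (w x - 1) : ℝ) : ℂ) := by
          rw [trace_kzk hproj]
          push_cast
          refine Finset.sum_congr rfl fun x _ => ?_
          rw [← hpK x]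
        obtain ⟨r, hr1, hr2⟩ := det_le_exp_trace hpsd htr
        have hreal : ((∑ A : Finset (Fin N), μ A * ∏ x ∈ A, w x : ℝ) : ℂ) = (r : ℂ) := by
          push_cast
          rw [hid, hcomm, ← hr1]
        have hre : (∑ A : Finset (Fin N), μ A * ∏ x ∈ A, w x) = r := by exact_mod_cast hreal
        rw [hre]
        exact hr2
      have hexp2 : ∑ x, p x * (w x - 1) ≤ θ * E + θ ^ 2 * ((m : ℝ) * c ^ 2) := by
        have h1 : ∀ x, p x * (w x - 1) ≤ p x * (θ * f x + (θ * f x) ^ 2) := by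
          intro x
          refine mul_le_mul_of_nonneg_left ?_ (hp0 x)
          have h2 := exp_le_one_add_add_sq (hθc x)
          rw [hw]
          dsimp only
          linarith
        calc ∑ x, p x * (w x - 1) ≤ ∑ x, p x * (θ * f x + (θ * f x) ^ 2) :=
              Finset.sum_le_sum fun x _ => h1 x
          _ = θ * (∑ x, p x * f x) + θ ^ 2 * ∑ x, p x * (f x) ^ 2 := by
              rw [Finset.mul_sum, Finset.mul_sum, ← Finset.sum_add_distrib]
              refine Finset.sum_congr rfl fun x _ => ?_
              ring
          _ ≤ θ * E + θ ^ 2 * ((m : ℝ) * c ^ 2) := by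
              have h2 : ∑ x, p x * (f x) ^ 2 ≤ ∑ x, p x * c ^ 2 :=
                Finset.sum_le_sum fun x _ => mul_le_mul_of_nonneg_left
                  (by have h3 := habs x; nlinarith [abs_nonneg (f x), sq_abs (f x)]) (hp0 x)
              have h3 : ∑ x, p x * c ^ 2 = (m : ℝ) * c ^ 2 := by
                rw [← Finset.sum_mul, hpsum]
              rw [hEp]
              nlinarith [sq_nonneg θ]
      calc (∑ A ∈ Finset.univ.filter (fun A : Finset (Fin N) => E + a ≤ ∑ x ∈ A, f x), μ A)
          ≤ ∑ A ∈ Finset.univ.filter (fun A : Finset (Fin N) => E + a ≤ ∑ x ∈ A, f x),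
              μ A * Real.exp (θ * ((∑ x ∈ A, f x) - E - a)) := by
            refine Finset.sum_le_sum fun A hA => ?_
            rw [Finset.mem_filter] at hA
            have hnn : 0 ≤ θ * ((∑ x ∈ A, f x) - E - a) :=
              mul_nonneg hθ0 (by linarith [hA.2])
            exact le_mul_of_one_le_right (hμ0 A) (Real.one_le_exp hnn)
        _ ≤ ∑ A : Finset (Fin N), μ A * Real.exp (θ * ((∑ x ∈ A, f x) - E - a)) :=
            Finset.sum_le_sum_of_subset_of_nonneg (Finset.filter_subset _ _)
              (fun A _ _ => mul_nonneg (hμ0 A) (Real.exp_pos _).le)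
        _ = Real.exp (-(θ * (E + a))) * ∑ A : Finset (Fin N), μ A * ∏ x ∈ A, w x := by
            rw [Finset.mul_sum]
            refine Finset.sum_congr rfl fun A _ => ?_
            have hsplit : θ * ((∑ x ∈ A, f x) - E - a)
                = (∑ x ∈ A, θ * f x) + (-(θ * (E + a))) := by
              rw [← Finset.mul_sum]
              ring
            rw [hsplit, Real.exp_add, Real.exp_sum]
            ring
        _ ≤ Real.exp (-(θ * (E + a))) * Real.exp (∑ x, p x * (w x - 1)) :=
            mul_le_mul_of_nonneg_left hMGF (Real.exp_pos _).le
        _ ≤ Real.exp (-(θ * (E + a))) * Real.exp (θ * E + θ ^ 2 * ((m : ℝ) * c ^ 2)) :=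
            mul_le_mul_of_nonneg_left (Real.exp_le_exp.mpr hexp2) (Real.exp_pos _).le
        _ = Real.exp (-(θ * a) + θ ^ 2 * ((m : ℝ) * c ^ 2)) := by
            rw [← Real.exp_add]
            ring_nf
        _ ≤ Real.exp (-(a ^ 2) / (8 * (m : ℝ) * c ^ 2)) := by
            apply Real.exp_le_exp.mpr
            have heq : -(θ * a) + θ ^ 2 * ((m : ℝ) * c ^ 2)
                = -(a ^ 2) / (4 * ((m : ℝ) * c ^ 2)) := by
              rw [hθ]
              field_simp
              ring
            rw [heq, show (8 : ℝ) * (m : ℝ) * c ^ 2 = 8 * ((m : ℝ) * c ^ 2) by ring,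
              neg_div, neg_div, neg_le_neg_iff]
            gcongr
            norm_num
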